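/- Let n be a natural number and let 1 ≤ i ≠ j ≤ n. There exists an automorphism α_i^j of G_n such that α_i^j(x_i) = x_j x_i x_j⁻¹ and α_i^j(x_k) = x_k for all k ≠ i. -/

import Mathlib

/-- The defining relations of the combinatorial Hantzsche-Wendt group `G_n`:
`x_i⁻¹ x_j² x_i = x_j⁻²` for all `i ≠ j`, written as relators. -/
def HWrels (n : ℕ) : Set (FreeGroup (Fin n)) :=
  {r | ∃ i j : Fin n, i ≠ j ∧
    r = (FreeGroup.of i)⁻¹ * FreeGroup.of j ^ 2 * FreeGroup.of i * FreeGroup.of j ^ 2}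

/-- The combinatorial Hantzsche-Wendt group `G_n`. -/
abbrev HW (n : ℕ) : Type := PresentedGroup (HWrels n)

/-- The generators `x_1, …, x_n` of `G_n`. -/
def x (n : ℕ) (i : Fin n) : HW n := PresentedGroup.of i

/-- For an `n × n` integer matrix `𝔞 = [a_ij]`, the element
`a_i = (x_1²)^{a_i1} ⋯ (x_n²)^{a_in}` of `A_n ≤ G_n`. -/
def aElt (n : ℕ) (𝔞 : Matrix (Fin n) (Fin n) ℤ) (i : Fin n) : HW n :=
  ((List.finRange n).map fun j => (x n j ^ 2) ^ 𝔞 i j).prod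

section ConjLemmas

variable {G : Type*} [Group G] {a s : G}

lemma Lconj (h : a⁻¹ * s * a = s⁻¹) : a⁻¹ * s⁻¹ * a = s := by
  have h2 : (a⁻¹ * s * a)⁻¹ = s := by rw [h, inv_inv]
  calc a⁻¹ * s⁻¹ * a = (a⁻¹ * s * a)⁻¹ := by group
    _ = s := h2

lemma Lswap (h : a⁻¹ * s * a = s⁻¹) : a * s * a⁻¹ = s⁻¹ := by
  have h2 : a⁻¹ * s⁻¹ * a = s := Lconj h
  have h3 := congrArg (fun t => a * t * a⁻¹) h2
  calc a * s * a⁻¹ = a * (a⁻¹ * s⁻¹ * a) * a⁻¹ := h3.symm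
    _ = s⁻¹ := by group

lemma Lswap' (h : a * s * a⁻¹ = s⁻¹) : a⁻¹ * s * a = s⁻¹ := by
  have h1 : (a⁻¹)⁻¹ * s * a⁻¹ = s⁻¹ := by rw [inv_inv]; exact h
  have h2 := Lswap h1
  simpa using h2

lemma Lconj' (h : a * s * a⁻¹ = s⁻¹) : a * s⁻¹ * a⁻¹ = s := by
  have h1 : (a⁻¹)⁻¹ * s * a⁻¹ = s⁻¹ := by rw [inv_inv]; exact h
  have h2 := Lconj h1
  simpa using h2

end ConjLemmas

/-- The defining relation holds in `HW n`: `x_a⁻¹ x_b² x_a = x_b⁻²` for `a ≠ b`. -/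
lemma HWrel1 (n : ℕ) (a b : Fin n) (h : a ≠ b) :
    (x n a)⁻¹ * (x n b) ^ 2 * x n a = ((x n b) ^ 2)⁻¹ := by
  have hmem : ((FreeGroup.of a)⁻¹ * FreeGroup.of b ^ 2 * FreeGroup.of a * FreeGroup.of b ^ 2)
      ∈ HWrels n := ⟨a, b, h, rfl⟩
  have h1 : (QuotientGroup.mk ((FreeGroup.of a)⁻¹ * FreeGroup.of b ^ 2 * FreeGroup.of a *
      FreeGroup.of b ^ 2) : PresentedGroup (HWrels n)) = 1 :=
    (QuotientGroup.eq_one_iff _).mpr (Subgroup.subset_normalClosure hmem)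
  have h2 : (x n a)⁻¹ * (x n b) ^ 2 * x n a * (x n b) ^ 2 = 1 := by
    exact h1
  exact eq_inv_of_mul_eq_one_left h2

/-- The candidate images of the generators: `x_i ↦ c x_i c⁻¹`, `x_k ↦ x_k` else. -/
def fc (n : ℕ) (i : Fin n) (c : HW n) : Fin n → HW n :=
  Function.update (x n) i (c * x n i * c⁻¹)

lemma fc_same (n : ℕ) (i : Fin n) (c : HW n) : fc n i c i = c * x n i * c⁻¹ :=
  Function.update_self i _ _

lemma fc_ne (n : ℕ) (i : Fin n) (c : HW n) {k : Fin n} (hk : k ≠ i) : fc n i c k = x n k :=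
  Function.update_of_ne hk _ _

lemma key (n : ℕ) (i j : Fin n) (hij : i ≠ j) (c : HW n)
    (hcj : Commute c (x n j))
    (hc2 : ∀ b, b ≠ j → c * (x n b) ^ 2 * c⁻¹ = ((x n b) ^ 2)⁻¹) :
    ∀ r ∈ HWrels n, FreeGroup.lift (fc n i c) r = 1 := by
  rintro r ⟨a, b, hab, rfl⟩
  simp only [map_mul, map_inv, map_pow, FreeGroup.lift_apply_of]
  have hc2' : ∀ b, b ≠ j → c⁻¹ * (x n b) ^ 2 * c = ((x n b) ^ 2)⁻¹ := fun b hb =>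
    Lswap' (hc2 b hb)
  by_cases ha : a = i <;> by_cases hb : b = i
  · exact absurd (ha.trans hb.symm) hab
  · -- a = i, b ≠ i
    rw [ha] at hab ⊢
    rw [fc_same, fc_ne n i c hb]
    by_cases hbj : b = j
    · rw [hbj] at hab ⊢
      have cj : c⁻¹ * (x n j) ^ 2 * c = (x n j) ^ 2 := by
        have := (hcj.inv_left.pow_right 2).eq
        calc c⁻¹ * (x n j) ^ 2 * c = c⁻¹ * (x n j) ^ 2 * c := rfl
          _ = (x n j) ^ 2 * c⁻¹ * c := by rw [this]
          _ = (x n j) ^ 2 := by group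
      have cjinv : c * ((x n j) ^ 2)⁻¹ * c⁻¹ = ((x n j) ^ 2)⁻¹ := by
        have := ((hcj.pow_right 2).inv_right).eq
        calc c * ((x n j) ^ 2)⁻¹ * c⁻¹ = ((x n j) ^ 2)⁻¹ * c * c⁻¹ := by rw [this]
          _ = ((x n j) ^ 2)⁻¹ := by group
      calc (c * x n i * c⁻¹)⁻¹ * (x n j) ^ 2 * (c * x n i * c⁻¹) * (x n j) ^ 2
          = c * ((x n i)⁻¹ * (c⁻¹ * (x n j) ^ 2 * c) * x n i) * c⁻¹ * (x n j) ^ 2 := by group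
        _ = c * ((x n i)⁻¹ * (x n j) ^ 2 * x n i) * c⁻¹ * (x n j) ^ 2 := by rw [cj]
        _ = c * ((x n j) ^ 2)⁻¹ * c⁻¹ * (x n j) ^ 2 := by rw [HWrel1 n i j hij]
        _ = (c * ((x n j) ^ 2)⁻¹ * c⁻¹) * (x n j) ^ 2 := by group
        _ = ((x n j) ^ 2)⁻¹ * (x n j) ^ 2 := by rw [cjinv]
        _ = 1 := by group
    · calc (c * x n i * c⁻¹)⁻¹ * (x n b) ^ 2 * (c * x n i * c⁻¹) * (x n b) ^ 2
          = c * ((x n i)⁻¹ * (c⁻¹ * (x n b) ^ 2 * c) * x n i) * c⁻¹ * (x n b) ^ 2 := by group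
        _ = c * ((x n i)⁻¹ * ((x n b) ^ 2)⁻¹ * x n i) * c⁻¹ * (x n b) ^ 2 := by
            rw [hc2' b hbj]
        _ = c * (x n b) ^ 2 * c⁻¹ * (x n b) ^ 2 := by rw [Lconj (HWrel1 n i b hab)]
        _ = ((x n b) ^ 2)⁻¹ * (x n b) ^ 2 := by rw [hc2 b hbj]
        _ = 1 := by group
  · -- b = i, a ≠ i
    rw [hb] at hab ⊢
    rw [fc_same, fc_ne n i c ha]
    have e2 : (c * x n i * c⁻¹) ^ 2 = c * (x n i) ^ 2 * c⁻¹ := by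
      rw [pow_two, pow_two]; group
    rw [e2, hc2 i hij]
    calc (x n a)⁻¹ * ((x n i) ^ 2)⁻¹ * x n a * ((x n i) ^ 2)⁻¹
        = ((x n a)⁻¹ * ((x n i) ^ 2)⁻¹ * x n a) * ((x n i) ^ 2)⁻¹ := by group
      _ = (x n i) ^ 2 * ((x n i) ^ 2)⁻¹ := by rw [Lconj (HWrel1 n a i hab)]
      _ = 1 := by group
  · rw [fc_ne n i c ha, fc_ne n i c hb]
    calc (x n a)⁻¹ * (x n b) ^ 2 * x n a * (x n b) ^ 2
        = ((x n a)⁻¹ * (x n b) ^ 2 * x n a) * (x n b) ^ 2 := by group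
      _ = ((x n b) ^ 2)⁻¹ * (x n b) ^ 2 := by rw [HWrel1 n a b hab]
      _ = 1 := by group

theorem stmt8 (n : ℕ) (i j : Fin n) (hij : i ≠ j) :
    ∃ α : HW n ≃* HW n,
      α (x n i) = x n j * x n i * (x n j)⁻¹ ∧ ∀ k, k ≠ i → α (x n k) = x n k := by
  have hc2φ : ∀ b, b ≠ j → x n j * (x n b) ^ 2 * (x n j)⁻¹ = ((x n b) ^ 2)⁻¹ := fun b hb =>
    Lswap (HWrel1 n j b (Ne.symm hb))
  have hc2ψ : ∀ b, b ≠ j → (x n j)⁻¹ * (x n b) ^ 2 * ((x n j)⁻¹)⁻¹ = ((x n b) ^ 2)⁻¹ := by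
    intro b hb; rw [inv_inv]; exact HWrel1 n j b (Ne.symm hb)
  have hφ := key n i j hij (x n j) (Commute.refl _) hc2φ
  have hψ := key n i j hij (x n j)⁻¹ ((Commute.refl _).inv_left) hc2ψ
  set φ := PresentedGroup.toGroup hφ with hφdef
  set ψ := PresentedGroup.toGroup hψ with hψdef
  have φof : ∀ k, φ (x n k) = fc n i (x n j) k := fun k => PresentedGroup.toGroup.of hφ
  have ψof : ∀ k, ψ (x n k) = fc n i (x n j)⁻¹ k := fun k => PresentedGroup.toGroup.of hψ
  have hψφ : ψ.comp φ = MonoidHom.id (HW n) := by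
    apply PresentedGroup.ext
    intro k
    show ψ (φ (x n k)) = x n k
    rw [φof k]
    by_cases hk : k = i
    · rw [hk, fc_same]
      simp only [map_mul, map_inv, ψof, fc_same, fc_ne n i _ (Ne.symm hij), inv_inv]
      group
    · rw [fc_ne n i _ hk, ψof k, fc_ne n i _ hk]
  have hφψ : φ.comp ψ = MonoidHom.id (HW n) := by
    apply PresentedGroup.ext
    intro k
    show φ (ψ (x n k)) = x n k
    rw [ψof k]
    by_cases hk : k = i
    · rw [hk, fc_same]
      simp only [map_mul, map_inv, φof, fc_same, fc_ne n i _ (Ne.symm hij), inv_inv]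
      group
    · rw [fc_ne n i _ hk, φof k, fc_ne n i _ hk]
  refine ⟨MonoidHom.toMulEquiv φ ψ hψφ hφψ, ?_, ?_⟩
  · show φ (x n i) = _
    rw [φof i, fc_same]
  · intro k hk
    show φ (x n k) = _
    rw [φof k, fc_ne n i _ hk]
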